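/- Let f : ℕ → ℂ be an arithmetic function, k a positive integer, and p > 0 a real number. Suppose there exist constants C > 0 and α with max(0, p−k) < α < p such that |S_k(x,t)| ≤ C·x^α for all real x ≥ 1 and all t ∈ ℝ. Then the series F_{k,p}(t) = Σ_{n=1}^∞ f(n)e^{2πi n^k t}/n^p converges for every t ∈ ℝ, and F_{k,p} is Hölder continuous with exponent (p−α)/k: there exists a constant C₂ > 0 such that |F_{k,p}(s) − F_{k,p}(t)| ≤ C₂·|s−t|^{(p−α)/k} for all s, t ∈ ℝ. Moreover, the same Hölder estimate holds for the real-valued functions t ↦ |F_{k,p}(t)|, t ↦ Re F_{k,p}(t), and t ↦ Im F_{k,p}(t). -/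

import Mathlib

open Filter Finset Topology

lemma abs_exp_I_sub_one (r : ℝ) : ‖Complex.exp (r * Complex.I) - 1‖ ≤ |r| := by
  have h : Complex.exp (r * Complex.I) - 1
      = ((Real.cos r - 1 : ℝ) : ℂ) + (Real.sin r : ℝ) * Complex.I := by
    rw [Complex.exp_mul_I, ← Complex.ofReal_cos, ← Complex.ofReal_sin]
    push_cast; ring
  rw [h, Complex.norm_add_mul_I]
  rw [show (Real.cos r - 1) ^ 2 + Real.sin r ^ 2 = 2 - 2 * Real.cos r by
    have := Real.sin_sq_add_cos_sq r; nlinarith]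
  have h1 : 2 - 2 * Real.cos r ≤ r ^ 2 := by
    have := Real.one_sub_sq_div_two_le_cos (x := r); nlinarith
  calc Real.sqrt (2 - 2 * Real.cos r) ≤ Real.sqrt (r ^ 2) := Real.sqrt_le_sqrt h1
    _ = |r| := Real.sqrt_sq_eq_abs r

lemma bern_neg {s c : ℝ} (hs : 0 < 1 + s) (hc : c ≤ 0) : 1 + c * s ≤ (1 + s) ^ c := by
  rw [Real.rpow_def_of_pos hs]
  have h1 : Real.log (1 + s) ≤ s := by
    have := Real.log_le_sub_one_of_pos hs; linarith
  have h2 : c * s ≤ Real.log (1 + s) * c := by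
    have := mul_le_mul_of_nonpos_left h1 hc; linarith [this]
  have h3 := Real.add_one_le_exp (Real.log (1 + s) * c)
  linarith

lemma bern_pos {s c : ℝ} (hs : -1 ≤ s) (hc0 : 0 < c) (hc1 : c ≤ 1) :
    (1 + s) ^ c ≤ 1 + c * s := by
  rcases eq_or_lt_of_le hc1 with h | h
  · subst h; rw [Real.rpow_one]; linarith
  rcases eq_or_ne s 0 with rfl | hs'
  · simp
  exact (rpow_one_add_lt_one_add_mul_self hs hs' hc0 h).le

lemma step1 {c x : ℝ} (hc : c ≤ 0) (hx : 1 ≤ x) : x ^ c - (x + 1) ^ c ≤ -c * x ^ (c - 1) := by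
  have hx0 : (0:ℝ) < x := lt_of_lt_of_le one_pos hx
  have hs : 0 < 1 + 1 / x := by positivity
  have hb := bern_neg hs hc
  have hsplit : (x + 1) ^ c = x ^ c * (1 + 1 / x) ^ c := by
    rw [← Real.mul_rpow hx0.le (by positivity)]
    congr 1; field_simp; try ring
  have hxc : 0 < x ^ c := Real.rpow_pos_of_pos hx0 c
  have hpow : x ^ c * (1 / x) = x ^ (c - 1) := by
    rw [Real.rpow_sub hx0, Real.rpow_one]; field_simp
  have : x ^ c * (1 + c * (1 / x)) ≤ (x + 1) ^ c := by
    rw [hsplit]; exact mul_le_mul_of_nonneg_left hb hxc.le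
  nlinarith [this]

lemma step2 {c x : ℝ} (hc : c ≤ 0) (hx : 2 ≤ x) : x ^ c - c * x ^ (c - 1) ≤ (x - 1) ^ c := by
  have hx0 : (0:ℝ) < x := by linarith
  have hs : 0 < 1 + -(1 / x) := by
    have : 1 / x ≤ 1 / 2 := by
      apply div_le_div_of_nonneg_left one_pos.le (by norm_num) hx
    linarith
  have hb := bern_neg hs hc
  have hsplit : (x - 1) ^ c = x ^ c * (1 + -(1 / x)) ^ c := by
    rw [← Real.mul_rpow hx0.le hs.le]
    congr 1; field_simp; try ring
  have hxc : 0 < x ^ c := Real.rpow_pos_of_pos hx0 c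
  have hpow : x ^ c * (1 / x) = x ^ (c - 1) := by
    rw [Real.rpow_sub hx0, Real.rpow_one]; field_simp
  have : x ^ c * (1 + c * -(1 / x)) ≤ (x - 1) ^ c := by
    rw [hsplit]; exact mul_le_mul_of_nonneg_left hb hxc.le
  nlinarith [this]

lemma step3 {c x : ℝ} (hc0 : 0 < c) (hc1 : c ≤ 1) (hx : 1 ≤ x) :
    (x - 1) ^ c ≤ x ^ c - c * x ^ (c - 1) := by
  have hx0 : (0:ℝ) < x := lt_of_lt_of_le one_pos hx
  have hs1 : (-1:ℝ) ≤ -(1 / x) := by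
    have : 1 / x ≤ 1 := by rw [div_le_one hx0]; linarith
    linarith
  have hs : 0 ≤ 1 + -(1 / x) := by linarith
  have hb := bern_pos hs1 hc0 hc1
  have hsplit : (x - 1) ^ c = x ^ c * (1 + -(1 / x)) ^ c := by
    rw [← Real.mul_rpow hx0.le hs]
    congr 1; field_simp; try ring
  have hxc : 0 < x ^ c := Real.rpow_pos_of_pos hx0 c
  have hpow : x ^ c * (1 / x) = x ^ (c - 1) := by
    rw [Real.rpow_sub hx0, Real.rpow_one]; field_simp
  have : (x - 1) ^ c ≤ x ^ c * (1 + c * -(1 / x)) := by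
    rw [hsplit]; exact mul_le_mul_of_nonneg_left hb hxc.le
  nlinarith [this]

lemma sum_head {β : ℝ} (hβ : -1 < β) : ∃ K : ℝ, 0 < K ∧ ∀ M : ℕ, 1 ≤ M →
    ∑ n ∈ Icc 1 M, ((n:ℝ)) ^ β ≤ K * (M:ℝ) ^ (β + 1) := by
  rcases le_or_gt 0 β with hβ0 | hβ0
  · refine ⟨1, one_pos, fun M hM => ?_⟩
    have hM0 : (0:ℝ) < M := by exact_mod_cast hM
    calc ∑ n ∈ Icc 1 M, ((n:ℝ)) ^ β ≤ ∑ n ∈ Icc 1 M, (M:ℝ) ^ β := by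
          apply Finset.sum_le_sum
          intro n hn
          apply Real.rpow_le_rpow (by positivity)
            (by exact_mod_cast (Finset.mem_Icc.mp hn).2) hβ0
      _ = (M:ℝ) * (M:ℝ) ^ β := by
          rw [Finset.sum_const, Nat.card_Icc]; simp
      _ = 1 * (M:ℝ) ^ (β + 1) := by
          rw [one_mul, Real.rpow_add hM0, Real.rpow_one]; ring
  · set c := β + 1 with hc
    have hc0 : 0 < c := by simp only [hc]; linarith
    have hc1 : c ≤ 1 := by simp only [hc]; linarith
    refine ⟨1 / c, by positivity, fun M hM => ?_⟩
    have key : ∀ n : ℕ, 1 ≤ n → (n:ℝ) ^ β * c ≤ ((n:ℝ)) ^ c - (((n:ℝ)) - 1) ^ c := by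
      intro n hn
      have hn1 : (1:ℝ) ≤ n := by exact_mod_cast hn
      have h := step3 hc0 hc1 hn1
      have hcb : c - 1 = β := by simp only [hc]; ring
      rw [hcb] at h; linarith
    have tele : ∑ n ∈ Icc 1 M, (((n:ℝ)) ^ c - (((n:ℝ)) - 1) ^ c) = (M:ℝ) ^ c := by
      have h1 : ∑ n ∈ Icc 1 M, (((n:ℝ)) ^ c - (((n:ℝ)) - 1) ^ c)
          = ∑ i ∈ Finset.range M, ((((i+1:ℕ):ℝ)) ^ c - (((i:ℕ):ℝ)) ^ c) := by
        rw [← Finset.Ico_add_one_right_eq_Icc, Finset.sum_Ico_eq_sum_range]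
        simp only [Nat.add_sub_cancel]
        apply Finset.sum_congr rfl
        intro i _
        push_cast; ring_nf
      rw [h1, Finset.sum_range_sub (f := fun i => ((i:ℕ):ℝ) ^ c)]
      simp [Real.zero_rpow hc0.ne']
    rw [one_div, ← div_eq_inv_mul, le_div_iff₀ hc0, Finset.sum_mul]
    calc ∑ n ∈ Icc 1 M, ((n:ℝ)) ^ β * c
        ≤ ∑ n ∈ Icc 1 M, (((n:ℝ)) ^ c - (((n:ℝ)) - 1) ^ c) := by
          apply Finset.sum_le_sum
          intro n hn
          exact key n (Finset.mem_Icc.mp hn).1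
      _ = (M:ℝ) ^ c := tele
      _ = (M:ℝ) ^ (β + 1) := by rw [hc]

lemma sum_tail {γ : ℝ} (hγ : γ < -1) (M N : ℕ) (hM : 1 ≤ M) :
    ∑ n ∈ Icc (M+1) N, ((n:ℝ)) ^ γ ≤ (M:ℝ) ^ (γ + 1) / (-(γ + 1)) := by
  set c := γ + 1 with hc
  have hc0 : c < 0 := by simp only [hc]; linarith
  have hnc : 0 < -c := by linarith
  have hM0 : (0:ℝ) < M := by exact_mod_cast hM
  have key : ∀ n : ℕ, M + 1 ≤ n → (n:ℝ) ^ γ * (-c) ≤ (((n:ℝ)) - 1) ^ c - ((n:ℝ)) ^ c := by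
    intro n hn
    have hn2 : (2:ℝ) ≤ n := by
      have h2 : 2 ≤ n := le_trans (by omega) hn
      exact_mod_cast h2
    have h := step2 hc0.le hn2
    have hcb : c - 1 = γ := by simp only [hc]; ring
    rw [hcb] at h; linarith
  have tele : ∑ n ∈ Icc (M+1) N, ((((n:ℝ)) - 1) ^ c - ((n:ℝ)) ^ c) ≤ (M:ℝ) ^ c := by
    have h1 : ∑ n ∈ Icc (M+1) N, ((((n:ℝ)) - 1) ^ c - ((n:ℝ)) ^ c)
        = ∑ i ∈ Finset.range (N + 1 - (M+1)), ((((M+i:ℕ):ℝ)) ^ c - (((M+(i+1):ℕ):ℝ)) ^ c) := by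
      rw [← Finset.Ico_add_one_right_eq_Icc, Finset.sum_Ico_eq_sum_range]
      apply Finset.sum_congr rfl
      intro i _
      push_cast; ring_nf
    rw [h1, Finset.sum_range_sub' (f := fun i => ((M+i:ℕ):ℝ) ^ c)]
    simp only [Nat.add_zero]
    have h2 : (0:ℝ) ≤ (((M + (N + 1 - (M+1)) : ℕ):ℝ)) ^ c := by positivity
    linarith
  rw [div_eq_inv_mul, ← div_eq_inv_mul, le_div_iff₀ hnc, Finset.sum_mul]
  calc ∑ n ∈ Icc (M+1) N, ((n:ℝ)) ^ γ * (-c)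
      ≤ ∑ n ∈ Icc (M+1) N, ((((n:ℝ)) - 1) ^ c - ((n:ℝ)) ^ c) := by
        apply Finset.sum_le_sum
        intro n hn
        exact key n (Finset.mem_Icc.mp hn).1
    _ ≤ (M:ℝ) ^ c := tele

lemma abel_sum (a b : ℕ → ℂ) (N : ℕ) :
    ∑ n ∈ Icc 1 N, a n * b n
      = (∑ i ∈ Icc 1 N, a i) * b N
        + ∑ n ∈ Icc 1 (N-1), (∑ i ∈ Icc 1 n, a i) * (b n - b (n+1)) := by
  induction N with
  | zero => simp
  | succ N ih =>
    rcases Nat.eq_zero_or_pos N with rfl | hN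
    · simp
    have h1 : ∑ n ∈ Icc 1 (N+1), a n * b n = (∑ n ∈ Icc 1 N, a n * b n) + a (N+1) * b (N+1) :=
      Finset.sum_Icc_succ_top (by omega) _
    have h2 : ∑ i ∈ Icc 1 (N+1), a i = (∑ i ∈ Icc 1 N, a i) + a (N+1) :=
      Finset.sum_Icc_succ_top (by omega) _
    have h3 : (N+1) - 1 = N := by omega
    have h4 : Icc 1 N = Icc 1 ((N-1)+1) := by congr 1; omega
    have h5 : ∑ n ∈ Icc 1 N, (∑ i ∈ Icc 1 n, a i) * (b n - b (n+1))
        = (∑ n ∈ Icc 1 (N-1), (∑ i ∈ Icc 1 n, a i) * (b n - b (n+1)))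
          + (∑ i ∈ Icc 1 N, a i) * (b N - b (N+1)) := by
      rw [h4, Finset.sum_Icc_succ_top (by omega), show N - 1 + 1 = N from by omega]
    rw [h1, ih, h3, h5, h2]
    ring

lemma sum_tail2 {γ : ℝ} (hγ : γ < -1) (M N : ℕ) (hM : 1 ≤ M) :
    ∑ n ∈ Icc M N, ((n:ℝ)) ^ γ ≤ (M:ℝ) ^ γ + (M:ℝ) ^ (γ + 1) / (-(γ + 1)) := by
  have hM0 : (0:ℝ) < M := by exact_mod_cast hM
  rcases le_or_gt M N with h | h
  · rw [← Finset.Ioc_insert_left h, Finset.sum_insert (by simp)]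
    have h2 : ∑ n ∈ Finset.Ioc M N, ((n:ℝ)) ^ γ ≤ (M:ℝ) ^ (γ + 1) / (-(γ + 1)) := by
      rw [← Finset.Icc_add_one_left_eq_Ioc]
      exact sum_tail hγ M N hM
    linarith
  · rw [Finset.Icc_eq_empty (by omega)]
    simp only [Finset.sum_empty]
    have hpos : 0 < -(γ+1) := by linarith
    positivity

lemma pow_diff_le {x y : ℝ} (hy : 0 ≤ y) (hxy : y ≤ x) (k : ℕ) :
    x ^ k - y ^ k ≤ k * x ^ (k - 1) * (x - y) := by
  have hx : 0 ≤ x := hy.trans hxy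
  have h := geom_sum₂_mul x y k
  rw [← h]
  apply mul_le_mul_of_nonneg_right _ (by linarith)
  calc ∑ i ∈ Finset.range k, x ^ i * y ^ (k - 1 - i)
      ≤ ∑ i ∈ Finset.range k, x ^ (k-1) := by
        apply Finset.sum_le_sum
        intro i hi
        have hik : i ≤ k - 1 := by have := Finset.mem_range.mp hi; omega
        calc x ^ i * y ^ (k - 1 - i) ≤ x ^ i * x ^ (k - 1 - i) := by
              apply mul_le_mul_of_nonneg_left (pow_le_pow_left₀ hy hxy _) (by positivity)
          _ = x ^ (k - 1) := by rw [← pow_add]; congr 1; omega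
    _ = k * x ^ (k-1) := by rw [Finset.sum_const, Finset.card_range, nsmul_eq_mul]

set_option maxHeartbeats 2000000 in
/-- If `|S_k(x,t)| ≤ C x^α` uniformly with `max(0, p−k) < α < p`, then
`F_{k,p}(t) = ∑ f(n) e^{2πi n^k t}/n^p` converges and is Hölder continuous with exponent
`(p−α)/k`, and likewise for `|F_{k,p}|`, `Re F_{k,p}`, `Im F_{k,p}`. -/
theorem stmt_6 (f : ℕ → ℂ) (k : ℕ) (hk : 1 ≤ k) (p : ℝ) (hp : 0 < p)
    (C α : ℝ) (hC : 0 < C) (hα : max 0 (p - (k : ℝ)) < α) (hαp : α < p)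
    (hS : ∀ x : ℝ, 1 ≤ x → ∀ t : ℝ,
      ‖∑ n ∈ Finset.Icc 1 ⌊x⌋₊,
        f n * Complex.exp (2 * Real.pi * Complex.I * ((n : ℂ) ^ k) * (t : ℂ))‖ ≤ C * x ^ α) :
    ∃ F : ℝ → ℂ,
      (∀ t : ℝ, Tendsto (fun N : ℕ => ∑ n ∈ Finset.Icc 1 N,
          f n * Complex.exp (2 * Real.pi * Complex.I * ((n : ℂ) ^ k) * (t : ℂ))
            / (((n : ℝ) ^ p : ℝ) : ℂ))
        atTop (𝓝 (F t))) ∧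
      ∃ C₂ : ℝ, 0 < C₂ ∧
        (∀ s t : ℝ, ‖F s - F t‖ ≤ C₂ * |s - t| ^ ((p - α) / k)) ∧
        (∀ s t : ℝ, |‖F s‖ - ‖F t‖| ≤ C₂ * |s - t| ^ ((p - α) / k)) ∧
        (∀ s t : ℝ, |(F s).re - (F t).re| ≤ C₂ * |s - t| ^ ((p - α) / k)) ∧
        (∀ s t : ℝ, |(F s).im - (F t).im| ≤ C₂ * |s - t| ^ ((p - α) / k)) := by
  have hα0 : 0 < α := lt_of_le_of_lt (le_max_left 0 (p - (k:ℝ))) hα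
  have hαk : p - (k:ℝ) < α := lt_of_le_of_lt (le_max_right 0 (p - (k:ℝ))) hα
  have hkR : (0:ℝ) < (k:ℝ) := by exact_mod_cast hk
  have hpα : 0 < p - α := by linarith
  set θ : ℝ := (p - α) / k with hθ
  have hθ0 : 0 < θ := div_pos hpα hkR
  set e : ℕ → ℝ → ℂ :=
    fun n t => Complex.exp (2 * Real.pi * Complex.I * ((n : ℂ) ^ k) * (t : ℂ)) with he
  set S : ℕ → ℝ → ℂ := fun N t => ∑ n ∈ Finset.Icc 1 N, f n * e n t with hSdef
  set b : ℕ → ℂ := fun n => (((n:ℝ) ^ (-p) : ℝ) : ℂ) with hbdef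
  set P : ℕ → ℝ → ℂ :=
    fun N t => ∑ n ∈ Finset.Icc 1 N, f n * e n t / (((n : ℝ) ^ p : ℝ) : ℂ) with hPdef
  have hSb : ∀ (N : ℕ) (t : ℝ), ‖S N t‖ ≤ C * (N:ℝ) ^ α := by
    intro N t
    rcases Nat.eq_zero_or_pos N with rfl | hN
    · simp [hSdef, Real.zero_rpow hα0.ne']
    · have h := hS (N:ℝ) (by exact_mod_cast hN) t
      rwa [Nat.floor_natCast] at h
  have hPalt : ∀ (N : ℕ) (t : ℝ), P N t = ∑ n ∈ Finset.Icc 1 N, (f n * e n t) * b n := by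
    intro N t
    simp only [hPdef, hbdef]
    apply Finset.sum_congr rfl
    intro n hn
    have hn0 : (0:ℝ) < n := by exact_mod_cast (Finset.mem_Icc.mp hn).1
    rw [div_eq_mul_inv, Real.rpow_neg hn0.le, Complex.ofReal_inv]
  have habsb : ∀ n : ℕ, ‖b n‖ = (n:ℝ) ^ (-p) := by
    intro n
    simp only [hbdef, Complex.norm_real, Real.norm_eq_abs]
    exact abs_of_nonneg (Real.rpow_nonneg (Nat.cast_nonneg n) _)
  have hbdiff : ∀ n : ℕ, 1 ≤ n → ‖b n - b (n+1)‖ ≤ p * (n:ℝ) ^ (-p - 1) := by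
    intro n hn
    have hn1 : (1:ℝ) ≤ n := by exact_mod_cast hn
    have hn0 : (0:ℝ) < n := by linarith
    have hmono : ((n+1:ℕ):ℝ) ^ (-p) ≤ (n:ℝ) ^ (-p) := by
      apply Real.rpow_le_rpow_of_nonpos hn0 (by push_cast; linarith) (by linarith)
    have hstep := step1 (c := -p) (x := (n:ℝ)) (by linarith) hn1
    simp only [hbdef, ← Complex.ofReal_sub, Complex.norm_real, Real.norm_eq_abs]
    rw [abs_of_nonneg (by push_cast; push_cast at hmono; linarith)]
    push_cast
    have : -(-p) = p := by ring
    rw [this] at hstep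
    have hexp : -p - 1 = -p - 1 := rfl
    linarith [hstep]
  set KT : ℝ := 2*C + C*p + C*p/(p-α) with hKTdef
  have hKT0 : 0 < KT := by
    have h1 : 0 < C*p/(p-α) := div_pos (by positivity) hpα
    have h2 : 0 < C*p := by positivity
    simp only [hKTdef]; positivity
  have hAbel : ∀ (t : ℝ) (L : ℕ),
      P L t = S L t * b L + ∑ n ∈ Finset.Icc 1 (L-1), S n t * (b n - b (n+1)) := by
    intro t L
    rw [hPalt]
    simp only [hSdef]
    exact abel_sum (fun n => f n * e n t) b L
  have tail : ∀ (t : ℝ) (M N : ℕ), 1 ≤ M → M ≤ N →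
      ‖P N t - P M t‖ ≤ KT * (M:ℝ) ^ (α - p) := by
    intro t M N hM hMN
    have hM0 : (0:ℝ) < M := by exact_mod_cast hM
    have hM1 : (1:ℝ) ≤ M := by exact_mod_cast hM
    have hN : 1 ≤ N := le_trans hM hMN
    have hN0 : (0:ℝ) < N := by exact_mod_cast hN
    have hMN' : (M:ℝ) ≤ N := by exact_mod_cast hMN
    have hMap : 0 < (M:ℝ) ^ (α - p) := Real.rpow_pos_of_pos hM0 _
    have hsplit : ∑ n ∈ Finset.Icc 1 (N-1), S n t * (b n - b (n+1))
        = (∑ n ∈ Finset.Icc 1 (M-1), S n t * (b n - b (n+1)))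
          + ∑ n ∈ Finset.Icc M (N-1), S n t * (b n - b (n+1)) := by
      have h0 : Finset.Icc 1 (N-1) = Finset.Ioc 0 (N-1) := Finset.Icc_add_one_left_eq_Ioc 0 (N-1)
      have h1 : Finset.Icc 1 (M-1) = Finset.Ioc 0 (M-1) := Finset.Icc_add_one_left_eq_Ioc 0 (M-1)
      have h2 : Finset.Icc M (N-1) = Finset.Ioc (M-1) (N-1) := by
        have h3 := Finset.Icc_add_one_left_eq_Ioc (M-1) (N-1)
        rwa [show M-1+1 = M by omega] at h3
      rw [h0, h1, h2]
      exact (Finset.sum_Ioc_consecutive _ (by omega) (by omega)).symm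
    have key : P N t - P M t
        = (S N t * b N - S M t * b M)
          + ∑ n ∈ Finset.Icc M (N-1), S n t * (b n - b (n+1)) := by
      rw [hAbel t N, hAbel t M, hsplit]; ring
    rw [key]
    have hT1 : ‖S N t * b N‖ ≤ C * (M:ℝ) ^ (α - p) := by
      rw [norm_mul, habsb]
      calc ‖S N t‖ * (N:ℝ) ^ (-p)
          ≤ (C * (N:ℝ) ^ α) * (N:ℝ) ^ (-p) := by
            apply mul_le_mul_of_nonneg_right (hSb N t) (Real.rpow_nonneg hN0.le _)
        _ = C * (N:ℝ) ^ (α - p) := by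
            rw [mul_assoc, ← Real.rpow_add hN0]; ring_nf
        _ ≤ C * (M:ℝ) ^ (α - p) := by
            apply mul_le_mul_of_nonneg_left _ hC.le
            exact Real.rpow_le_rpow_of_nonpos hM0 hMN' (by linarith)
    have hT2 : ‖S M t * b M‖ ≤ C * (M:ℝ) ^ (α - p) := by
      rw [norm_mul, habsb]
      calc ‖S M t‖ * (M:ℝ) ^ (-p)
          ≤ (C * (M:ℝ) ^ α) * (M:ℝ) ^ (-p) := by
            apply mul_le_mul_of_nonneg_right (hSb M t) (Real.rpow_nonneg hM0.le _)
        _ = C * (M:ℝ) ^ (α - p) := by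
            rw [mul_assoc, ← Real.rpow_add hM0]; ring_nf
    have hT3 : ‖∑ n ∈ Finset.Icc M (N-1), S n t * (b n - b (n+1))‖
        ≤ C * p * ((M:ℝ) ^ (α - p) + (M:ℝ) ^ (α - p) / (p - α)) := by
      calc ‖∑ n ∈ Finset.Icc M (N-1), S n t * (b n - b (n+1))‖
          ≤ ∑ n ∈ Finset.Icc M (N-1), ‖S n t * (b n - b (n+1))‖ :=
            norm_sum_le _ _
        _ ≤ ∑ n ∈ Finset.Icc M (N-1), C * p * (n:ℝ) ^ (α - p - 1) := by
            apply Finset.sum_le_sum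
            intro n hn
            have hn1 : 1 ≤ n := le_trans hM (Finset.mem_Icc.mp hn).1
            have hn0 : (0:ℝ) < n := by exact_mod_cast hn1
            rw [norm_mul]
            calc ‖S n t‖ * ‖b n - b (n+1)‖
                ≤ (C * (n:ℝ) ^ α) * (p * (n:ℝ) ^ (-p-1)) := by
                  apply mul_le_mul (hSb n t) (hbdiff n hn1) (norm_nonneg _)
                  positivity
              _ = C * p * (n:ℝ) ^ (α - p - 1) := by
                  rw [show α - p - 1 = α + (-p-1) by ring, Real.rpow_add hn0]; ring
        _ = C * p * ∑ n ∈ Finset.Icc M (N-1), (n:ℝ) ^ (α - p - 1) := by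
            rw [Finset.mul_sum]
        _ ≤ C * p * ((M:ℝ) ^ (α - p - 1) + (M:ℝ) ^ (α - p) / (p - α)) := by
            apply mul_le_mul_of_nonneg_left _ (by positivity)
            have h := sum_tail2 (γ := α - p - 1) (by linarith) M (N-1) hM
            rwa [show α - p - 1 + 1 = α - p by ring, show -(α - p) = p - α by ring] at h
        _ ≤ C * p * ((M:ℝ) ^ (α - p) + (M:ℝ) ^ (α - p) / (p - α)) := by
            apply mul_le_mul_of_nonneg_left _ (by positivity)
            have h := Real.rpow_le_rpow_of_exponent_le hM1 (show α - p - 1 ≤ α - p by linarith)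
            linarith
    calc ‖(S N t * b N - S M t * b M)
            + ∑ n ∈ Finset.Icc M (N-1), S n t * (b n - b (n+1))‖
        ≤ ‖S N t * b N - S M t * b M‖
          + ‖∑ n ∈ Finset.Icc M (N-1), S n t * (b n - b (n+1))‖ :=
          norm_add_le _ _
      _ ≤ (‖S N t * b N‖ + ‖S M t * b M‖)
          + ‖∑ n ∈ Finset.Icc M (N-1), S n t * (b n - b (n+1))‖ := by
          have := norm_sub_le (S N t * b N) (S M t * b M)
          linarith
      _ ≤ KT * (M:ℝ) ^ (α - p) := by
          have h3 := hT3
          have hd : C * p * ((M:ℝ) ^ (α - p) + (M:ℝ) ^ (α - p) / (p - α))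
              = C*p*(M:ℝ)^(α-p) + (C*p/(p-α))*(M:ℝ)^(α-p) := by
            field_simp
          rw [hd] at h3
          simp only [hKTdef]
          nlinarith [hT1, hT2, h3]
  have htz : Tendsto (fun N : ℕ => KT * ((N:ℝ)) ^ (α - p)) atTop (𝓝 0) := by
    have h1 : Tendsto (fun x : ℝ => x ^ (-(p-α))) atTop (𝓝 0) := tendsto_rpow_neg_atTop hpα
    have h2 := h1.comp (tendsto_natCast_atTop_atTop (R := ℝ))
    have h3 : ((fun x : ℝ => x ^ (-(p-α))) ∘ (fun N : ℕ => (N:ℝ)))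
        = fun N : ℕ => ((N:ℝ)) ^ (α - p) := by
      funext N; simp only [Function.comp_apply]; congr 1; ring
    rw [h3] at h2
    have h4 := h2.const_mul KT
    simpa using h4
  have conv : ∀ t : ℝ, ∃ L : ℂ, Tendsto (fun N => P N t) atTop (𝓝 L) := by
    intro t
    apply cauchySeq_tendsto_of_complete
    rw [Metric.cauchySeq_iff']
    intro ε hε
    rw [Metric.tendsto_atTop] at htz
    obtain ⟨N₀, hN₀⟩ := htz ε hε
    refine ⟨max N₀ 1, fun n hn => ?_⟩
    have h1 : 1 ≤ max N₀ 1 := le_max_right _ _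
    have h2 := tail t (max N₀ 1) n h1 hn
    have h3 := hN₀ (max N₀ 1) (le_max_left _ _)
    rw [Real.dist_eq, sub_zero] at h3
    have h4 : KT * ((max N₀ 1 : ℕ):ℝ) ^ (α - p) ≤ |KT * ((max N₀ 1 : ℕ):ℝ) ^ (α - p)| :=
      le_abs_self _
    rw [dist_eq_norm]
    calc ‖P n t - P (max N₀ 1) t‖ ≤ KT * ((max N₀ 1 : ℕ):ℝ) ^ (α - p) := h2
      _ ≤ |KT * ((max N₀ 1 : ℕ):ℝ) ^ (α - p)| := h4
      _ < ε := h3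
  choose F hF using conv
  have hFP : ∀ (t : ℝ) (M : ℕ), 1 ≤ M → ‖F t - P M t‖ ≤ KT * (M:ℝ) ^ (α - p) := by
    intro t M hM
    have h1 : Tendsto (fun N : ℕ => ‖P N t - P M t‖) atTop
        (𝓝 (‖F t - P M t‖)) := by
      exact (continuous_norm.tendsto _).comp ((hF t).sub tendsto_const_nhds)
    apply le_of_tendsto h1
    filter_upwards [eventually_ge_atTop M] with N hN
    exact tail t M N hM hN
  have hFbd : ∀ t : ℝ, ‖F t‖ ≤ KT + C := by
    intro t
    have h1 := hFP t 1 le_rfl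
    have h2 : P 1 t = S 1 t := by
      simp only [hPdef, hSdef]
      apply Finset.sum_congr rfl
      intro n hn
      have hn1 : n = 1 := by simpa using hn
      subst hn1
      norm_num
    have h3 : ‖S 1 t‖ ≤ C := by
      have h := hSb 1 t
      simpa using h
    have h4 : ((1:ℕ):ℝ) ^ (α - p) = 1 := by norm_num
    rw [h4, mul_one] at h1
    calc ‖F t‖ = ‖(F t - P 1 t) + P 1 t‖ := by ring_nf
      _ ≤ ‖F t - P 1 t‖ + ‖P 1 t‖ := norm_add_le _ _
      _ ≤ KT + C := by rw [h2] at h1 ⊢; linarith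
  obtain ⟨K₁, hK₁0, hK₁⟩ := sum_head (β := α + (k:ℝ) - p - 1) (by linarith)
  have hπ := Real.pi_pos
  have h2k : (0:ℝ) < 2 ^ (k-1) := by positivity
  set CH : ℝ := 2*Real.pi*C*(1 + ((k:ℝ)*2^(k-1) + p) * K₁) with hCHdef
  have hCH0 : 0 < CH := by
    simp only [hCHdef]
    have : 0 < ((k:ℝ)*2^(k-1) + p) * K₁ := by positivity
    positivity
  have head : ∀ (s t : ℝ) (M : ℕ), 1 ≤ M →
      ‖P M s - P M t‖ ≤ CH * |s - t| * (M:ℝ) ^ (α + k - p) := by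
    intro s t M hM
    have hM0 : (0:ℝ) < M := by exact_mod_cast hM
    have hM1 : (1:ℝ) ≤ M := by exact_mod_cast hM
    set E : ℕ → ℂ :=
      fun n => Complex.exp (2 * Real.pi * Complex.I * ((n : ℂ) ^ k) * ((s - t : ℝ) : ℂ))
      with hEdef
    set c : ℕ → ℂ := fun n => (E n - 1) * b n with hcdef
    have hes : ∀ n : ℕ, e n s = e n t * E n := by
      intro n
      simp only [he, hEdef, ← Complex.exp_add]
      congr 1
      push_cast
      ring
    have habsE1 : ∀ n : ℕ, ‖E n‖ = 1 := by
      intro n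
      have hr : (2 * Real.pi * Complex.I * ((n : ℂ) ^ k) * ((s - t : ℝ) : ℂ))
          = ((2 * Real.pi * (n:ℝ)^k * (s - t) : ℝ) : ℂ) * Complex.I := by
        push_cast; ring
      simp only [hEdef, hr, Complex.norm_exp_ofReal_mul_I]
    have habsE : ∀ n : ℕ, ‖E n - 1‖ ≤ 2*Real.pi*((n:ℝ)^k) * |s - t| := by
      intro n
      have hr : (2 * Real.pi * Complex.I * ((n : ℂ) ^ k) * ((s - t : ℝ) : ℂ))
          = ((2 * Real.pi * (n:ℝ)^k * (s - t) : ℝ) : ℂ) * Complex.I := by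
        push_cast; ring
      calc ‖E n - 1‖ ≤ |2 * Real.pi * (n:ℝ)^k * (s - t)| := by
            rw [hEdef]; simp only [hr]; exact abs_exp_I_sub_one _
        _ = 2*Real.pi*((n:ℝ)^k) * |s - t| := by
            rw [abs_mul (2 * Real.pi * (n:ℝ)^k)]
            congr 1
            exact abs_of_nonneg (by positivity)
    have habsEE : ∀ n : ℕ, 1 ≤ n →
        ‖E n - E (n+1)‖ ≤ 2*Real.pi*((k:ℝ)*2^(k-1)*(n:ℝ)^(k-1)) * |s - t| := by
      intro n hn
      have hn0 : (0:ℝ) < n := by exact_mod_cast hn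
      have hn1 : (1:ℝ) ≤ n := by exact_mod_cast hn
      set D : ℝ := ((n:ℝ)+1)^k - (n:ℝ)^k with hDdef
      have hD0 : 0 ≤ D := by
        simp only [hDdef]
        have : (n:ℝ)^k ≤ ((n:ℝ)+1)^k := pow_le_pow_left₀ (by positivity) (by linarith) k
        linarith
      have hsplit : E (n+1) = E n * Complex.exp (((2*Real.pi*D*(s-t) : ℝ):ℂ) * Complex.I) := by
        simp only [hEdef, ← Complex.exp_add]
        congr 1
        simp only [hDdef]
        push_cast
        ring
      have h1 : ‖E n - E (n+1)‖
          = ‖Complex.exp (((2*Real.pi*D*(s-t) : ℝ):ℂ) * Complex.I) - 1‖ := by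
        rw [hsplit, show E n - E n * Complex.exp (((2*Real.pi*D*(s-t) : ℝ):ℂ) * Complex.I)
          = E n * (1 - Complex.exp (((2*Real.pi*D*(s-t) : ℝ):ℂ) * Complex.I)) by ring,
          norm_mul, habsE1, one_mul, ← norm_neg]
        congr 1; ring
      have hDb : D ≤ (k:ℝ) * 2^(k-1) * (n:ℝ)^(k-1) := by
        have h2 := pow_diff_le (x := (n:ℝ)+1) (y := (n:ℝ)) (by positivity) (by linarith) k
        have h3 : ((n:ℝ)+1) ^ (k-1) ≤ (2*(n:ℝ)) ^ (k-1) :=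
          pow_le_pow_left₀ (by positivity) (by linarith) _
        have h4 : (2*(n:ℝ)) ^ (k-1) = 2^(k-1) * (n:ℝ)^(k-1) := mul_pow 2 _ _
        simp only [hDdef]
        calc ((n:ℝ)+1)^k - (n:ℝ)^k ≤ (k:ℝ) * ((n:ℝ)+1)^(k-1) * (((n:ℝ)+1) - n) := h2
          _ = (k:ℝ) * ((n:ℝ)+1)^(k-1) := by ring_nf
          _ ≤ (k:ℝ) * (2^(k-1) * (n:ℝ)^(k-1)) := by
              apply mul_le_mul_of_nonneg_left _ (by positivity)
              rw [← h4]; exact h3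
          _ = (k:ℝ) * 2^(k-1) * (n:ℝ)^(k-1) := by ring
      calc ‖E n - E (n+1)‖ ≤ |2*Real.pi*D*(s-t)| := by
            rw [h1]; exact abs_exp_I_sub_one _
        _ = (2*Real.pi*D) * |s - t| := by
            rw [abs_mul (2*Real.pi*D)]
            congr 1
            exact abs_of_nonneg (by positivity)
        _ ≤ 2*Real.pi*((k:ℝ)*2^(k-1)*(n:ℝ)^(k-1)) * |s - t| := by
            apply mul_le_mul_of_nonneg_right _ (abs_nonneg _)
            nlinarith [hDb, hπ, h2k]
    have hPdiff : P M s - P M t = ∑ n ∈ Finset.Icc 1 M, (f n * e n t) * c n := by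
      rw [hPalt M s, hPalt M t, ← Finset.sum_sub_distrib]
      apply Finset.sum_congr rfl
      intro n _
      simp only [hcdef]
      rw [hes n]
      ring
    have hcM : ‖c M‖ ≤ 2*Real.pi * |s - t| * (M:ℝ) ^ ((k:ℝ) - p) := by
      simp only [hcdef]
      rw [norm_mul, habsb]
      calc ‖E M - 1‖ * (M:ℝ)^(-p)
          ≤ (2*Real.pi*((M:ℝ)^k) * |s - t|) * (M:ℝ)^(-p) := by
            apply mul_le_mul_of_nonneg_right (habsE M) (Real.rpow_nonneg hM0.le _)
        _ = 2*Real.pi * |s - t| * (M:ℝ) ^ ((k:ℝ) - p) := by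
            rw [show (M:ℝ)^k = (M:ℝ)^((k:ℝ)) from (Real.rpow_natCast _ _).symm,
              show (k:ℝ) - p = (k:ℝ) + (-p) by ring, Real.rpow_add hM0]
            ring
    have hcdiff : ∀ n : ℕ, 1 ≤ n → ‖c n - c (n+1)‖
        ≤ 2*Real.pi*((k:ℝ)*2^(k-1) + p) * |s - t| * (n:ℝ) ^ ((k:ℝ) - 1 - p) := by
      intro n hn
      have hn0 : (0:ℝ) < n := by exact_mod_cast hn
      have hn1 : (1:ℝ) ≤ n := by exact_mod_cast hn
      have hiden : c n - c (n+1) = (E n - E (n+1)) * b (n+1) + (E n - 1) * (b n - b (n+1)) := by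
        simp only [hcdef]; ring
      have hb1 : ‖b (n+1)‖ ≤ (n:ℝ)^(-p) := by
        rw [habsb]
        push_cast
        exact Real.rpow_le_rpow_of_nonpos hn0 (by linarith) (by linarith)
      have hterm1 : ‖(E n - E (n+1)) * b (n+1)‖
          ≤ (2*Real.pi*((k:ℝ)*2^(k-1)) * |s - t|) * (n:ℝ) ^ ((k:ℝ) - 1 - p) := by
        rw [norm_mul]
        calc ‖E n - E (n+1)‖ * ‖b (n+1)‖
            ≤ (2*Real.pi*((k:ℝ)*2^(k-1)*(n:ℝ)^(k-1)) * |s - t|) * (n:ℝ)^(-p) := by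
              apply mul_le_mul (habsEE n hn) hb1 (norm_nonneg _) (by positivity)
          _ = (2*Real.pi*((k:ℝ)*2^(k-1)) * |s - t|) * ((n:ℝ)^(k-1) * (n:ℝ)^(-p)) := by ring
          _ = (2*Real.pi*((k:ℝ)*2^(k-1)) * |s - t|) * (n:ℝ) ^ ((k:ℝ) - 1 - p) := by
              congr 1
              rw [show (n:ℝ)^(k-1) = (n:ℝ)^(((k-1:ℕ):ℝ)) from (Real.rpow_natCast _ _).symm,
                ← Real.rpow_add hn0]
              congr 1
              have : ((k-1:ℕ):ℝ) = (k:ℝ) - 1 := by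
                have : (1:ℕ) ≤ k := hk
                push_cast [Nat.cast_sub this]
                ring
              rw [this]; ring
      have hterm2 : ‖(E n - 1) * (b n - b (n+1))‖
          ≤ (2*Real.pi*p * |s - t|) * (n:ℝ) ^ ((k:ℝ) - 1 - p) := by
        rw [norm_mul]
        calc ‖E n - 1‖ * ‖b n - b (n+1)‖
            ≤ (2*Real.pi*((n:ℝ)^k) * |s - t|) * (p * (n:ℝ)^(-p-1)) := by
              apply mul_le_mul (habsE n) (hbdiff n hn) (norm_nonneg _) (by positivity)
          _ = (2*Real.pi*p * |s - t|) * ((n:ℝ)^k * (n:ℝ)^(-p-1)) := by ring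
          _ = (2*Real.pi*p * |s - t|) * (n:ℝ) ^ ((k:ℝ) - 1 - p) := by
              congr 1
              rw [show (n:ℝ)^k = (n:ℝ)^((k:ℝ)) from (Real.rpow_natCast _ _).symm,
                ← Real.rpow_add hn0]
              congr 1
              ring
      calc ‖c n - c (n+1)‖
          ≤ ‖(E n - E (n+1)) * b (n+1)‖
            + ‖(E n - 1) * (b n - b (n+1))‖ := by
            rw [hiden]; exact norm_add_le _ _
        _ ≤ 2*Real.pi*((k:ℝ)*2^(k-1) + p) * |s - t| * (n:ℝ) ^ ((k:ℝ) - 1 - p) := by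
            have := hterm1
            have := hterm2
            have hnn : (0:ℝ) ≤ (n:ℝ) ^ ((k:ℝ) - 1 - p) := Real.rpow_nonneg hn0.le _
            nlinarith [abs_nonneg (s - t), hπ]
    have hAbelH : ∑ n ∈ Finset.Icc 1 M, (f n * e n t) * c n
        = S M t * c M + ∑ n ∈ Finset.Icc 1 (M-1), S n t * (c n - c (n+1)) := by
      simp only [hSdef]
      exact abel_sum (fun n => f n * e n t) c M
    have hsum : ‖∑ n ∈ Finset.Icc 1 (M-1), S n t * (c n - c (n+1))‖
        ≤ 2*Real.pi*C*(((k:ℝ)*2^(k-1) + p) * K₁) * |s - t| * (M:ℝ) ^ (α + k - p) := by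
      calc ‖∑ n ∈ Finset.Icc 1 (M-1), S n t * (c n - c (n+1))‖
          ≤ ∑ n ∈ Finset.Icc 1 (M-1), ‖S n t * (c n - c (n+1))‖ :=
            norm_sum_le _ _
        _ ≤ ∑ n ∈ Finset.Icc 1 (M-1),
              (2*Real.pi*C*((k:ℝ)*2^(k-1) + p) * |s - t|) * (n:ℝ) ^ (α + (k:ℝ) - p - 1) := by
            apply Finset.sum_le_sum
            intro n hn
            have hn1 : 1 ≤ n := (Finset.mem_Icc.mp hn).1
            have hn0 : (0:ℝ) < n := by exact_mod_cast hn1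
            rw [norm_mul]
            calc ‖S n t‖ * ‖c n - c (n+1)‖
                ≤ (C * (n:ℝ)^α) * (2*Real.pi*((k:ℝ)*2^(k-1) + p) * |s - t|
                    * (n:ℝ) ^ ((k:ℝ) - 1 - p)) := by
                  apply mul_le_mul (hSb n t) (hcdiff n hn1) (norm_nonneg _) (by positivity)
              _ = (2*Real.pi*C*((k:ℝ)*2^(k-1) + p) * |s - t|)
                    * ((n:ℝ)^α * (n:ℝ) ^ ((k:ℝ) - 1 - p)) := by ring
              _ = (2*Real.pi*C*((k:ℝ)*2^(k-1) + p) * |s - t|) * (n:ℝ) ^ (α + (k:ℝ) - p - 1) := by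
                  rw [← Real.rpow_add hn0]
                  congr 2
                  ring
        _ = (2*Real.pi*C*((k:ℝ)*2^(k-1) + p) * |s - t|)
              * ∑ n ∈ Finset.Icc 1 (M-1), (n:ℝ) ^ (α + (k:ℝ) - p - 1) := by
            rw [Finset.mul_sum]
        _ ≤ (2*Real.pi*C*((k:ℝ)*2^(k-1) + p) * |s - t|)
              * ∑ n ∈ Finset.Icc 1 M, (n:ℝ) ^ (α + (k:ℝ) - p - 1) := by
            apply mul_le_mul_of_nonneg_left _ (by positivity)
            apply Finset.sum_le_sum_of_subset_of_nonneg
            · apply Finset.Icc_subset_Icc_right; omega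
            · intro i _ _; positivity
        _ ≤ (2*Real.pi*C*((k:ℝ)*2^(k-1) + p) * |s - t|) * (K₁ * (M:ℝ) ^ (α + (k:ℝ) - p - 1 + 1)) := by
            apply mul_le_mul_of_nonneg_left (hK₁ M hM) (by positivity)
        _ = 2*Real.pi*C*(((k:ℝ)*2^(k-1) + p) * K₁) * |s - t| * (M:ℝ) ^ (α + k - p) := by
            rw [show α + (k:ℝ) - p - 1 + 1 = α + (k:ℝ) - p by ring]
            ring
    have hSMcM : ‖S M t * c M‖ ≤ 2*Real.pi*C * |s - t| * (M:ℝ) ^ (α + k - p) := by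
      rw [norm_mul]
      calc ‖S M t‖ * ‖c M‖
          ≤ (C * (M:ℝ)^α) * (2*Real.pi * |s - t| * (M:ℝ) ^ ((k:ℝ) - p)) := by
            apply mul_le_mul (hSb M t) hcM (norm_nonneg _) (by positivity)
        _ = (2*Real.pi*C * |s - t|) * ((M:ℝ)^α * (M:ℝ) ^ ((k:ℝ) - p)) := by ring
        _ = 2*Real.pi*C * |s - t| * (M:ℝ) ^ (α + k - p) := by
            rw [← Real.rpow_add hM0]
            congr 2
            ring
    rw [hPdiff, hAbelH]
    calc ‖S M t * c M + ∑ n ∈ Finset.Icc 1 (M-1), S n t * (c n - c (n+1))‖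
        ≤ ‖S M t * c M‖
          + ‖∑ n ∈ Finset.Icc 1 (M-1), S n t * (c n - c (n+1))‖ :=
          norm_add_le _ _
      _ ≤ CH * |s - t| * (M:ℝ) ^ (α + k - p) := by
          simp only [hCHdef]
          have h1 := hSMcM
          have h2 := hsum
          nlinarith [Real.rpow_nonneg hM0.le (α + k - p), abs_nonneg (s - t)]
  set C₂ : ℝ := 2*(KT + C) + 2*KT*(2:ℝ)^(p-α) + CH + 1 with hC₂def
  have h2pα : (0:ℝ) < (2:ℝ)^(p-α) := Real.rpow_pos_of_pos two_pos _
  have hC₂0 : 0 < C₂ := by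
    simp only [hC₂def]
    nlinarith [hKT0, hCH0, hC, h2pα]
  have main : ∀ s t : ℝ, ‖F s - F t‖ ≤ C₂ * |s - t| ^ θ := by
    intro s t
    rcases eq_or_ne s t with rfl | hst
    · simp [Real.zero_rpow hθ0.ne']
    have hδ0 : (0:ℝ) < |s - t| := abs_pos.mpr (sub_ne_zero.mpr hst)
    have hδθ : (0:ℝ) ≤ |s - t| ^ θ := Real.rpow_nonneg hδ0.le _
    rcases le_or_gt 1 |s - t| with hδ1 | hδ1
    · have h1 : ‖F s - F t‖ ≤ 2*(KT + C) := by
        calc ‖F s - F t‖ ≤ ‖F s‖ + ‖F t‖ :=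
            norm_sub_le _ _
          _ ≤ 2*(KT+C) := by
              have := hFbd s
              have := hFbd t
              linarith
      have h2 : (1:ℝ) ≤ |s - t| ^ θ := by
        calc (1:ℝ) = 1 ^ θ := (Real.one_rpow θ).symm
          _ ≤ |s - t| ^ θ := Real.rpow_le_rpow (by norm_num) hδ1 hθ0.le
      calc ‖F s - F t‖ ≤ 2*(KT+C) := h1
        _ ≤ 2*(KT+C) * (|s - t| ^ θ) := by nlinarith [hKT0, hC]
        _ ≤ C₂ * |s - t| ^ θ := by
            apply mul_le_mul_of_nonneg_right _ hδθ
            simp only [hC₂def]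
            nlinarith [hKT0, h2pα, hCH0]
    · set x : ℝ := |s - t| ^ (-(1/(k:ℝ))) with hxdef
      have hx1 : 1 < x := by
        rw [hxdef, Real.one_lt_rpow_iff_of_pos hδ0]
        right
        refine ⟨hδ1, ?_⟩
        have : 0 < 1/(k:ℝ) := by positivity
        linarith
      have hx0 : (0:ℝ) < x := by linarith
      set M : ℕ := ⌊x⌋₊ with hMdef
      have hM1 : 1 ≤ M := Nat.le_floor (by exact_mod_cast hx1.le)
      have hMx : (M:ℝ) ≤ x := Nat.floor_le hx0.le
      have hxM : x < (M:ℝ) + 1 := Nat.lt_floor_add_one x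
      have hM0 : (0:ℝ) < M := by exact_mod_cast hM1
      have hM1' : (1:ℝ) ≤ M := by exact_mod_cast hM1
      have hMhalf : x / 2 ≤ (M:ℝ) := by linarith
      have hxθ1 : x ^ (α - p) = |s - t| ^ θ := by
        rw [hxdef, ← Real.rpow_mul hδ0.le]
        congr 1
        rw [hθ]
        ring
      have hbound1 : ((M:ℝ)) ^ (α - p) ≤ (2:ℝ)^(p-α) * |s - t| ^ θ := by
        have h1 : ((M:ℝ)) ^ (α - p) ≤ (x/2) ^ (α - p) :=
          Real.rpow_le_rpow_of_nonpos (by linarith) hMhalf (by linarith)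
        have h2 : (x/2) ^ (α - p) = x ^ (α-p) * (2:ℝ)^(p-α) := by
          rw [Real.div_rpow hx0.le two_pos.le, div_eq_mul_inv, ← Real.rpow_neg two_pos.le,
            show -(α-p) = p-α by ring]
        rw [h2, hxθ1] at h1
        linarith
      have hbound2 : |s - t| * ((M:ℝ)) ^ (α + k - p) ≤ |s - t| ^ θ := by
        have h1 : ((M:ℝ)) ^ (α + k - p) ≤ x ^ (α + k - p) :=
          Real.rpow_le_rpow hM0.le hMx (by linarith)
        have h2 : |s - t| * x ^ (α + k - p) = |s - t| ^ θ := by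
          rw [hxdef, ← Real.rpow_mul hδ0.le]
          nth_rewrite 1 [show |s - t| = |s - t| ^ (1:ℝ) from (Real.rpow_one _).symm]
          rw [← Real.rpow_add hδ0]
          congr 1
          rw [hθ]
          field_simp
          ring
        calc |s - t| * ((M:ℝ)) ^ (α + k - p) ≤ |s - t| * x ^ (α + k - p) := by
              apply mul_le_mul_of_nonneg_left h1 hδ0.le
          _ = |s - t| ^ θ := h2
      have hd1 := hFP s M hM1
      have hd2 := hFP t M hM1
      have hd3 := head s t M hM1
      calc ‖F s - F t‖
          = ‖(F s - P M s) + (P M s - P M t) + (P M t - F t)‖ := by ring_nf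
        _ ≤ ‖(F s - P M s) + (P M s - P M t)‖ + ‖P M t - F t‖ :=
            norm_add_le _ _
        _ ≤ ‖F s - P M s‖ + ‖P M s - P M t‖
              + ‖P M t - F t‖ := by
            have := norm_add_le (F s - P M s) (P M s - P M t)
            linarith
        _ ≤ KT * (M:ℝ)^(α-p) + CH * |s - t| * (M:ℝ)^(α+k-p) + KT * (M:ℝ)^(α-p) := by
            have hd2' : ‖P M t - F t‖ ≤ KT * (M:ℝ)^(α-p) := by
              rw [← norm_neg, neg_sub]
              exact hd2
            linarith [hd1, hd3, hd2']
        _ ≤ C₂ * |s - t| ^ θ := by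
            have hb2 : CH * (|s - t| * (M:ℝ)^(α+k-p)) ≤ CH * |s - t| ^ θ :=
              mul_le_mul_of_nonneg_left hbound2 hCH0.le
            have hb1 : KT * ((M:ℝ)^(α-p)) ≤ KT * ((2:ℝ)^(p-α) * |s - t| ^ θ) :=
              mul_le_mul_of_nonneg_left hbound1 hKT0.le
            simp only [hC₂def]
            nlinarith [hδθ, hKT0, hCH0]
  refine ⟨F, ?_, C₂, hC₂0, main, ?_, ?_, ?_⟩
  · intro t
    have h := hF t
    simp only [hPdef, he] at h
    exact h
  · intro s t
    calc |‖F s‖ - ‖F t‖| = |‖F s‖ - ‖F t‖| := by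
          rfl
      _ ≤ ‖F s - F t‖ := abs_norm_sub_norm_le _ _
      _ = ‖F s - F t‖ := rfl
      _ ≤ C₂ * |s - t| ^ θ := main s t
  · intro s t
    calc |(F s).re - (F t).re| = |(F s - F t).re| := by rw [Complex.sub_re]
      _ ≤ ‖F s - F t‖ := Complex.abs_re_le_norm _
      _ ≤ C₂ * |s - t| ^ θ := main s t
  · intro s t
    calc |(F s).im - (F t).im| = |(F s - F t).im| := by rw [Complex.sub_im]
      _ ≤ ‖F s - F t‖ := Complex.abs_im_le_norm _
      _ ≤ C₂ * |s - t| ^ θ := main s t
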